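/- There exists a constant A < 2 such that: for any r with A < r ≤ 2 and any holomorphic function Z₁ : 𝔻_r → 𝔻₂ with Z₁(0) = 0 and Z₁'(0) = 1, there exists a holomorphic map φ : 𝔻 → 𝔻_r with φ(0) = 0, φ'(0) ≠ 0, and Z₁(φ(z)) = z for all z ∈ 𝔻. (That is, Z₁ admits a holomorphic right inverse defined on the whole unit disc.) -/

import Mathlib

open Metric Filter Topology

lemma aux_mobius {ρ : ℝ} (hρ : 1 < ρ) {w : ℂ} (hw : ‖w‖ < ρ) :
    ρ * ‖w - 1‖ < ‖((ρ^2 : ℝ) : ℂ) - w‖ := by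
  have h0 : 0 ≤ ‖((ρ^2 : ℝ) : ℂ) - w‖ := norm_nonneg _
  refine lt_of_pow_lt_pow_left₀ 2 h0 ?_
  have e1 : ‖w - 1‖ ^ 2 = (w.re - 1) ^ 2 + w.im ^ 2 := by
    rw [Complex.sq_norm, Complex.normSq_apply, Complex.sub_re,
      Complex.sub_im, Complex.one_re, Complex.one_im]
    ring
  have e2 : ‖((ρ^2 : ℝ) : ℂ) - w‖ ^ 2 = (ρ^2 - w.re) ^ 2 + w.im ^ 2 := by
    rw [Complex.sq_norm, Complex.normSq_apply, Complex.sub_re,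
      Complex.sub_im, Complex.ofReal_re, Complex.ofReal_im]
    ring
  have e3 : w.re ^ 2 + w.im ^ 2 < ρ ^ 2 := by
    have h1 : ‖w‖ ^ 2 < ρ ^ 2 := by
      have := norm_nonneg w
      nlinarith
    rw [Complex.sq_norm, Complex.normSq_apply] at h1
    nlinarith
  rw [mul_pow, e1, e2]
  nlinarith [mul_pos (by nlinarith : (0:ℝ) < ρ^2 - 1)
    (by nlinarith : (0:ℝ) < ρ^2 - (w.re^2 + w.im^2))]

noncomputable def auxSeq (g : ℂ → ℂ) : ℕ → ℂ → ℂ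
  | 0 => fun _ => 0
  | n+1 => fun w => w - g (auxSeq g n w)

theorem stmt15 :
    ∃ A : ℝ, A < 2 ∧
      ∀ r : ℝ, A < r → r ≤ 2 →
        ∀ Z₁ : ℂ → ℂ,
          DifferentiableOn ℂ Z₁ (ball (0 : ℂ) r) →
          Set.MapsTo Z₁ (ball (0 : ℂ) r) (ball (0 : ℂ) 2) →
          Z₁ 0 = 0 → deriv Z₁ 0 = 1 →
          ∃ φ : ℂ → ℂ,
            DifferentiableOn ℂ φ (ball (0 : ℂ) 1) ∧
            Set.MapsTo φ (ball (0 : ℂ) 1) (ball (0 : ℂ) r) ∧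
            φ 0 = 0 ∧ deriv φ 0 ≠ 0 ∧
            ∀ z ∈ ball (0 : ℂ) 1, Z₁ (φ z) = z := by
  refine ⟨1.999, by norm_num, fun r hr hr2 f hd hmaps hf0 hf'0 => ?_⟩
  have hr1 : (1999/1000 : ℝ) < r := by norm_num at hr; linarith
  have hr0 : (0:ℝ) < r := by linarith
  set ρ : ℝ := 1001/1000 with hρdef
  have hρ1 : (1:ℝ) < ρ := by norm_num [hρdef]
  -- the function q = dslope f 0
  set q : ℂ → ℂ := dslope f 0 with hqdef
  have hqdiff : DifferentiableOn ℂ q (ball (0:ℂ) r) :=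
    (Complex.differentiableOn_dslope (isOpen_ball.mem_nhds (mem_ball_self hr0))).mpr hd
  have hq0 : q 0 = 1 := by rw [hqdef, dslope_same, hf'0]
  have hfq : ∀ z : ℂ, f z = z * q z := by
    intro z
    rcases eq_or_ne z 0 with rfl | hz
    · simp [hf0]
    · rw [hqdef, dslope_of_ne f hz, slope_def_field, hf0, sub_zero, sub_zero]
      field_simp
  have hqb : ∀ z ∈ ball (0:ℂ) r, ‖q z‖ ≤ 2 / r := fun z hz =>
    Complex.norm_dslope_le_div_of_mapsTo_ball hd (by rw [hf0]; exact hmaps.mono_right ball_subset_closedBall) hz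
  have h2rρ : 2 / r < ρ := by
    rw [div_lt_iff₀ hr0, hρdef]
    nlinarith
  have hqlt : ∀ z ∈ ball (0:ℂ) r, ‖q z‖ < ρ := fun z hz => lt_of_le_of_lt (hqb z hz) h2rρ
  -- the Möbius transform composed with q
  set P : ℂ := ((ρ^2 : ℝ) : ℂ) with hPdef
  have hPnorm : ‖P‖ = ρ^2 := by
    rw [hPdef, Complex.norm_real, Real.norm_eq_abs, abs_of_pos (by nlinarith)]
  have hPne : ∀ z ∈ ball (0:ℂ) r, P - q z ≠ 0 := by
    intro z hz h
    have h1 : q z = P := by linear_combination -h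
    have := hqlt z hz
    rw [h1, hPnorm] at this
    nlinarith
  set F : ℂ → ℂ := fun z => P * (q z - 1) / (P - q z) with hFdef
  have hF0 : F 0 = 0 := by simp [hFdef, hq0]
  have hFdiff : DifferentiableOn ℂ F (ball (0:ℂ) r) := by
    apply DifferentiableOn.div
    · exact (differentiableOn_const P).mul (hqdiff.sub (differentiableOn_const 1))
    · exact (differentiableOn_const P).sub hqdiff
    · exact hPne
  have hFmaps : Set.MapsTo F (ball (0:ℂ) r) (ball (F 0) ρ) := by
    rw [hF0]
    intro z hz
    rw [mem_ball_zero_iff, hFdef]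
    have hmob := aux_mobius hρ1 (hqlt z hz)
    have hden : 0 < ‖P - q z‖ := norm_pos_iff.mpr (hPne z hz)
    rw [norm_div, norm_mul, hPnorm, div_lt_iff₀ hden]
    calc ρ^2 * ‖q z - 1‖ = ρ * (ρ * ‖q z - 1‖) := by ring
    _ < ρ * ‖P - q z‖ := by
        rcases eq_or_lt_of_le (norm_nonneg (q z - 1)) with h | h
        · nlinarith
        · exact (mul_lt_mul_iff_right₀ (by linarith)).mpr hmob
  have hS : ∀ z ∈ ball (0:ℂ) r, ‖F z‖ ≤ ρ / r * ‖z‖ := by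
    intro z hz
    have := Complex.dist_le_div_mul_dist_of_mapsTo_ball hFdiff (hFmaps.mono_right ball_subset_closedBall) hz
    rwa [hF0, dist_zero_right, dist_zero_right] at this
  -- key estimate : q is close to 1 on the disc of radius 7/4
  have hball74 : ∀ z : ℂ, z ∈ closedBall (0:ℂ) (7/4) → z ∈ ball (0:ℂ) r := by
    intro z hz
    rw [mem_closedBall_zero_iff] at hz
    rw [mem_ball_zero_iff]
    linarith
  have hq1 : ∀ z ∈ closedBall (0:ℂ) (7/4), ‖q z - 1‖ ≤ 1/70 := by
    intro z hz
    have hzr := hball74 z hz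
    rw [mem_closedBall_zero_iff] at hz
    have hkey : F z * (P - q z) = P * (q z - 1) := by
      rw [hFdef]
      exact div_mul_cancel₀ _ (hPne z hzr)
    have hnorm : ρ^2 * ‖q z - 1‖ = ‖F z‖ * ‖P - q z‖ := by
      rw [← norm_mul, hkey, norm_mul, hPnorm]
    have htri : ‖P - q z‖ ≤ (ρ^2 - 1) + ‖q z - 1‖ := by
      have : P - q z = (P - 1) + (1 - q z) := by ring
      rw [this]
      refine (norm_add_le _ _).trans ?_
      have h1 : ‖P - (1:ℂ)‖ = ρ^2 - 1 := by
        have : P - (1:ℂ) = ((ρ^2 - 1 : ℝ) : ℂ) := by rw [hPdef]; push_cast; ring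
        rw [this, Complex.norm_real, Real.norm_eq_abs, abs_of_pos (by nlinarith)]
      rw [h1, norm_sub_rev]
    have hFz := hS z hzr
    set t : ℝ := ‖q z - 1‖ with htdef
    have ht0 : 0 ≤ t := norm_nonneg _
    have hFz0 : 0 ≤ ‖F z‖ := norm_nonneg _
    have hstep : ρ^2 * t ≤ (ρ / r * ‖z‖) * ((ρ^2 - 1) + t) := by
      rw [hnorm]
      exact mul_le_mul hFz htri (norm_nonneg _) (by positivity)
    have hz0 : 0 ≤ ‖z‖ := norm_nonneg _
    have hstep2 : r * (ρ^2 * t) ≤ ρ * ‖z‖ * ((ρ^2 - 1) + t) := by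
      have := mul_le_mul_of_nonneg_left hstep hr0.le
      calc r * (ρ^2 * t) ≤ r * ((ρ / r * ‖z‖) * ((ρ^2 - 1) + t)) := this
      _ = ρ * ‖z‖ * ((ρ^2 - 1) + t) := by field_simp
    rw [hρdef] at hstep2
    have hA : (1999/1000) * ((1001/1000:ℝ)^2 * t) ≤ r * (ρ^2 * t) := by
      rw [hρdef]; nlinarith
    have hB : (1001/1000:ℝ) * ‖z‖ * ((1001/1000)^2 - 1 + t) ≤
        (1001/1000) * (7/4) * ((1001/1000)^2 - 1 + t) := by nlinarith
    rw [hρdef] at hA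
    linarith
  -- the function g = f - id is small on the disc of radius 7/4
  set g : ℂ → ℂ := fun z => f z - z with hgdef
  have hg0 : g 0 = 0 := by simp [hgdef, hf0]
  have hgdiff : DifferentiableOn ℂ g (ball (0:ℂ) r) := hd.sub differentiableOn_id
  have hgb : ∀ z ∈ closedBall (0:ℂ) (7/4), ‖g z‖ ≤ 1/40 := by
    intro z hz
    have h1 := hq1 z hz
    rw [mem_closedBall_zero_iff] at hz
    have : g z = z * (q z - 1) := by rw [hgdef]; simp only []; rw [hfq z]; ring
    rw [this, norm_mul]
    calc ‖z‖ * ‖q z - 1‖ ≤ (7/4) * (1/70) :=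
      mul_le_mul hz h1 (norm_nonneg _) (by norm_num)
    _ = 1/40 := by norm_num
  -- derivative bound for g on the disc of radius 3/2
  have hg' : ∀ z ∈ closedBall (0:ℂ) (3/2), ‖deriv g z‖ ≤ 1/4 := by
    intro z hz
    rw [mem_closedBall_zero_iff] at hz
    have hsub : ball z (1/4) ⊆ closedBall (0:ℂ) (7/4) := by
      intro ζ hζ
      rw [mem_ball, dist_eq_norm] at hζ
      rw [mem_closedBall_zero_iff]
      calc ‖ζ‖ = ‖(ζ - z) + z‖ := by ring_nf
      _ ≤ ‖ζ - z‖ + ‖z‖ := norm_add_le _ _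
      _ ≤ 7/4 := by linarith
    have hsub2 : ball z (1/4) ⊆ ball (0:ℂ) r := fun ζ hζ => hball74 ζ (hsub hζ)
    have hmaps2 : Set.MapsTo g (ball z (1/4)) (ball (g z) (1/16)) := by
      intro ζ hζ
      rw [mem_ball, dist_eq_norm]
      have h1 := hgb ζ (hsub hζ)
      have h2 := hgb z (by rw [mem_closedBall_zero_iff]; linarith)
      calc ‖g ζ - g z‖ ≤ ‖g ζ‖ + ‖g z‖ := norm_sub_le _ _
      _ ≤ 1/40 + 1/40 := add_le_add h1 h2
      _ < 1/16 := by norm_num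
    have := Complex.norm_deriv_le_div_of_mapsTo_ball (hgdiff.mono hsub2) (hmaps2.mono_right ball_subset_closedBall) (by norm_num)
    calc ‖deriv g z‖ ≤ (1/16) / (1/4) := this
    _ = 1/4 := by norm_num
  -- Lipschitz bound for g on the disc of radius 3/2
  have hball32 : ∀ z : ℂ, z ∈ closedBall (0:ℂ) (3/2) → z ∈ ball (0:ℂ) r := by
    intro z hz
    rw [mem_closedBall_zero_iff] at hz
    rw [mem_ball_zero_iff]
    linarith
  have hglip : ∀ a ∈ closedBall (0:ℂ) (3/2), ∀ b ∈ closedBall (0:ℂ) (3/2),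
      ‖g a - g b‖ ≤ 1/4 * ‖a - b‖ := by
    intro a ha b hb
    exact (convex_closedBall (0:ℂ) (3/2)).norm_image_sub_le_of_norm_deriv_le
      (fun x hx => hgdiff.differentiableAt (isOpen_ball.mem_nhds (hball32 x hx)))
      hg' hb ha
  -- the approximating sequence
  set u : ℕ → ℂ → ℂ := auxSeq g with hudef
  have hurec : ∀ n w, u (n+1) w = w - g (u n w) := fun n w => rfl
  have humem : ∀ w ∈ ball (0:ℂ) 1, ∀ n, ‖u n w‖ ≤ 3/2 := by
    intro w hw n
    rw [mem_ball_zero_iff] at hw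
    induction n with
    | zero => simp only [hudef, auxSeq]; norm_num
    | succ n ih =>
      have h1 : ‖g (u n w)‖ ≤ 1/40 :=
        hgb _ (by rw [mem_closedBall_zero_iff]; linarith)
      calc ‖u (n+1) w‖ = ‖w - g (u n w)‖ := by rw [hurec]
      _ ≤ ‖w‖ + ‖g (u n w)‖ := norm_sub_le _ _
      _ ≤ 3/2 := by linarith
  have hucontr : ∀ w ∈ ball (0:ℂ) 1, ∀ n, ‖u (n+1) w - u n w‖ ≤ (1/4)^n := by
    intro w hw n
    have hw' := mem_ball_zero_iff.mp hw
    induction n with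
    | zero =>
      have : u 1 w - u 0 w = w := by
        rw [hurec]
        simp [hudef, auxSeq, hg0]
      rw [this, pow_zero]
      linarith
    | succ n ih =>
      have hmem1 : u (n+1) w ∈ closedBall (0:ℂ) (3/2) := by
        rw [mem_closedBall_zero_iff]; exact humem w hw (n+1)
      have hmem0 : u n w ∈ closedBall (0:ℂ) (3/2) := by
        rw [mem_closedBall_zero_iff]; exact humem w hw n
      have : u (n+2) w - u (n+1) w = g (u n w) - g (u (n+1) w) := by
        rw [hurec, hurec]; ring
      rw [this]
      calc ‖g (u n w) - g (u (n+1) w)‖ ≤ 1/4 * ‖u n w - u (n+1) w‖ :=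
        hglip _ hmem0 _ hmem1
      _ = 1/4 * ‖u (n+1) w - u n w‖ := by rw [norm_sub_rev]
      _ ≤ 1/4 * (1/4)^n := by linarith
      _ = (1/4)^(n+1) := by ring
  have hudist : ∀ w ∈ ball (0:ℂ) 1, ∀ n, dist (u n w) (u (n+1) w) ≤ 1 * (1/4:ℝ)^n := by
    intro w hw n
    rw [dist_eq_norm, norm_sub_rev, one_mul]
    exact hucontr w hw n
  have hucauchy : ∀ w ∈ ball (0:ℂ) 1, CauchySeq (fun n => u n w) := by
    intro w hw
    exact cauchySeq_of_le_geometric (1/4) 1 (by norm_num) (hudist w hw)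
  set φ : ℂ → ℂ := fun w => limUnder atTop (fun n => u n w) with hφdef
  have htend : ∀ w ∈ ball (0:ℂ) 1, Tendsto (fun n => u n w) atTop (𝓝 (φ w)) :=
    fun w hw => (hucauchy w hw).tendsto_limUnder
  have hdistφ : ∀ w ∈ ball (0:ℂ) 1, ∀ n,
      dist (u n w) (φ w) ≤ 1 * (1/4:ℝ)^n / (1 - 1/4) := by
    intro w hw n
    exact dist_le_of_le_geometric_of_tendsto (1/4) 1 (by norm_num) (hudist w hw)
      (htend w hw) n
  have huniform : TendstoUniformlyOn (fun n w => u n w) φ atTop (ball (0:ℂ) 1) := by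
    rw [Metric.tendstoUniformlyOn_iff]
    intro ε hε
    have h0 : Tendsto (fun n : ℕ => 1 * (1/4:ℝ)^n / (1 - 1/4)) atTop (𝓝 0) := by
      have := (tendsto_pow_atTop_nhds_zero_of_lt_one (by norm_num) (by norm_num) :
        Tendsto (fun n : ℕ => (1/4:ℝ)^n) atTop (𝓝 0))
      have h2 := (this.const_mul (1:ℝ)).div_const (1 - 1/4)
      simpa using h2
    filter_upwards [h0.eventually (gt_mem_nhds hε)] with n hn w hw
    calc dist (φ w) (u n w) = dist (u n w) (φ w) := dist_comm _ _
    _ ≤ 1 * (1/4:ℝ)^n / (1 - 1/4) := hdistφ w hw n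
    _ < ε := hn
  have humaps : ∀ n, Set.MapsTo (u n) (ball (0:ℂ) 1) (ball (0:ℂ) r) := by
    intro n w hw
    rw [mem_ball_zero_iff]
    have := humem w hw n
    linarith
  have hudiff : ∀ n, DifferentiableOn ℂ (u n) (ball (0:ℂ) 1) := by
    intro n
    induction n with
    | zero =>
      have : u 0 = fun _ : ℂ => (0:ℂ) := rfl
      rw [this]; exact differentiableOn_const 0
    | succ n ih =>
      have : u (n+1) = fun w => w - g (u n w) := rfl
      rw [this]
      exact differentiableOn_id.sub (hgdiff.comp ih (humaps n))
  have hφdiff : DifferentiableOn ℂ φ (ball (0:ℂ) 1) :=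
    huniform.tendstoLocallyUniformlyOn.differentiableOn
      (Eventually.of_forall hudiff) isOpen_ball
  have hφle : ∀ w ∈ ball (0:ℂ) 1, ‖φ w‖ ≤ 3/2 := by
    intro w hw
    exact le_of_tendsto ((htend w hw).norm) (Eventually.of_forall (humem w hw))
  have hφmaps : Set.MapsTo φ (ball (0:ℂ) 1) (ball (0:ℂ) r) := by
    intro w hw
    rw [mem_ball_zero_iff]
    have := hφle w hw
    linarith
  have hφmem : ∀ w ∈ ball (0:ℂ) 1, φ w ∈ ball (0:ℂ) r := hφmaps
  have hfix : ∀ w ∈ ball (0:ℂ) 1, f (φ w) = w := by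
    intro w hw
    have h1 : Tendsto (fun n => u (n+1) w) atTop (𝓝 (φ w)) :=
      (htend w hw).comp (tendsto_add_atTop_nat 1)
    have hc : ContinuousAt g (φ w) :=
      (hgdiff.differentiableAt (isOpen_ball.mem_nhds (hφmem w hw))).continuousAt
    have h2 : Tendsto (fun n => w - g (u n w)) atTop (𝓝 (w - g (φ w))) :=
      tendsto_const_nhds.sub (hc.tendsto.comp (htend w hw))
    have h3 : (fun n => u (n+1) w) = fun n => w - g (u n w) := by
      funext n; exact hurec n w
    rw [h3] at h1
    have heq : φ w = w - g (φ w) := tendsto_nhds_unique h1 h2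
    have : g (φ w) = f (φ w) - φ w := rfl
    rw [this] at heq
    linear_combination heq
  have hφ0 : φ 0 = 0 := by
    have h01 : (0:ℂ) ∈ ball (0:ℂ) 1 := mem_ball_self one_pos
    have hz : ∀ n, u n 0 = 0 := by
      intro n
      induction n with
      | zero => rfl
      | succ n ih => rw [hurec, ih, hg0, sub_zero]
    have := htend 0 h01
    rw [show (fun n => u n 0) = fun _ : ℕ => (0:ℂ) from funext hz] at this
    exact tendsto_nhds_unique this tendsto_const_nhds
  have hφderiv : deriv φ 0 = 1 := by
    have h01 : (0:ℂ) ∈ ball (0:ℂ) 1 := mem_ball_self one_pos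
    have hφat : DifferentiableAt ℂ φ 0 :=
      hφdiff.differentiableAt (isOpen_ball.mem_nhds h01)
    have hfat : DifferentiableAt ℂ f (φ 0) := by
      rw [hφ0]
      exact hd.differentiableAt (isOpen_ball.mem_nhds (mem_ball_self hr0))
    have hcomp : deriv (f ∘ φ) 0 = deriv f (φ 0) * deriv φ 0 := deriv_comp 0 hfat hφat
    have heq : f ∘ φ =ᶠ[𝓝 (0:ℂ)] id :=
      Filter.eventuallyEq_of_mem (isOpen_ball.mem_nhds h01) (fun w hw => hfix w hw)
    have hid : deriv (f ∘ φ) 0 = 1 := by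
      rw [heq.deriv_eq, deriv_id]
    rw [hcomp, hφ0, hf'0, one_mul] at hid
    exact hid
  exact ⟨φ, hφdiff, hφmaps, hφ0, by rw [hφderiv]; exact one_ne_zero, hfix⟩
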